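/- Let p be a probability distribution on a finite set S, O : S → Δ(X) a stochastic observation kernel with all entries strictly positive, and q(x) = Σ_s p(s) O(x|s) the induced observation distribution. Then H(q) ≤ H(p) + log(max_{s,x} 1/O(x|s)). That is, the observation entropy exceeds the state entropy by at most the logarithm of the largest entry of the Hadamard (entrywise) inverse of O. -/
import Mathlib


noncomputable def shannonEntropy {X : Type*} [Fintype X] (p : X → ℝ) : ℝ :=
  -∑ x, p x * Real.log (p x)

theorem entropy_obs_le_entropy_state_add_log_maxInv {S X : Type*}
    [Fintype S] [Fintype X] [Nonempty S] [Nonempty X]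
    (p : S → ℝ) (hp0 : ∀ s, 0 ≤ p s) (hp1 : ∑ s, p s = 1)
    (O : S → X → ℝ) (hO0 : ∀ s x, 0 < O s x) (hO1 : ∀ s, ∑ x, O s x = 1)
    (q : X → ℝ) (hq : ∀ x, q x = ∑ s, p s * O s x) :
    shannonEntropy q ≤ shannonEntropy p +
      Real.log ((Finset.univ (α := S × X)).sup' Finset.univ_nonempty
        (fun sx => 1 / O sx.1 sx.2)) := by
  set M := (Finset.univ (α := S × X)).sup' Finset.univ_nonempty
      (fun sx => 1 / O sx.1 sx.2) with hM
  have hMge : ∀ s x, 1 / O s x ≤ M := fun s x =>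
    Finset.le_sup' (f := fun sx : S × X => 1 / O sx.1 sx.2) (Finset.mem_univ (s, x))
  have hlogM : ∀ s x, -Real.log (O s x) ≤ Real.log M := by
    intro s x
    rw [← Real.log_inv]
    exact Real.log_le_log (inv_pos.mpr (hO0 s x)) (by simpa [one_div] using hMge s x)
  have key : ∀ s x, -(p s * O s x * Real.log (q x)) ≤
      -(p s * O s x * Real.log (p s)) + p s * O s x * Real.log M := by
    intro s x
    rcases eq_or_lt_of_le (hp0 s) with h | h
    · simp [← h]
    · have hqx : p s * O s x ≤ q x := by
        rw [hq x]
        exact Finset.single_le_sum (f := fun s => p s * O s x)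
          (fun s _ => mul_nonneg (hp0 s) (hO0 s x).le) (Finset.mem_univ s)
      have hpos : 0 < p s * O s x := mul_pos h (hO0 s x)
      have hlog : Real.log (p s) + Real.log (O s x) ≤ Real.log (q x) := by
        rw [← Real.log_mul (ne_of_gt h) (ne_of_gt (hO0 s x))]
        exact Real.log_le_log hpos hqx
      nlinarith [mul_le_mul_of_nonneg_left hlog hpos.le,
        mul_le_mul_of_nonneg_left (hlogM s x) hpos.le]
  have step1 : shannonEntropy q ≤
      ∑ s, ∑ x, (-(p s * O s x * Real.log (p s)) + p s * O s x * Real.log M) := by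
    have e1 : shannonEntropy q = ∑ x, ∑ s, -(p s * O s x * Real.log (q x)) := by
      rw [shannonEntropy, ← Finset.sum_neg_distrib]
      refine Finset.sum_congr rfl fun x _ => ?_
      rw [hq x, Finset.sum_mul, ← Finset.sum_neg_distrib]
    rw [e1, Finset.sum_comm]
    exact Finset.sum_le_sum fun s _ => Finset.sum_le_sum fun x _ => key s x
  have step2 : ∀ s, ∑ x, (-(p s * O s x * Real.log (p s)) + p s * O s x * Real.log M)
      = -(p s * Real.log (p s)) + p s * Real.log M := by
    intro s
    have e : ∀ x, -(p s * O s x * Real.log (p s)) + p s * O s x * Real.log M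
        = O s x * (-(p s * Real.log (p s)) + p s * Real.log M) := fun x => by ring
    simp_rw [e]
    rw [← Finset.sum_mul, hO1 s, one_mul]
  calc shannonEntropy q ≤
      ∑ s, ∑ x, (-(p s * O s x * Real.log (p s)) + p s * O s x * Real.log M) := step1
    _ = ∑ s, (-(p s * Real.log (p s)) + p s * Real.log M) :=
        Finset.sum_congr rfl fun s _ => step2 s
    _ = shannonEntropy p + Real.log M := by
        rw [Finset.sum_add_distrib, Finset.sum_neg_distrib, ← Finset.sum_mul, hp1, one_mul,
          shannonEntropy]
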